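/- Let δ ∈ (0,1] and L_A > 0, and assume f is L_A-smooth with respect to the atomic norm on lin(A). Let x ∈ lin(A), let z̃ ∈ A satisfy ⟨∇f(x), z̃⟩ ≤ δ · min_{z∈A} ⟨∇f(x), z⟩ (δ-approximate LMO), and set x⁺ := x − (⟨∇f(x), z̃⟩/L_A)·z̃. Then f(x⁺) ≤ f(x) − (δ²/(2·L_A)) · (sup_{z∈A} ⟨−∇f(x), z⟩)². -/

import Mathlib

open Submodule Set Pointwise RealInnerProductSpace

/-- one-step sufficient decrease of generalized matching pursuit
with a `δ`-approximate LMO, for `f` that is `L_A`-smooth w.r.t. the atomic norm on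
`lin(A)`: the decrease is at least `δ²/(2L_A)` times the squared dual atomic norm of
the negative gradient. -/
theorem stmt_10 {H : Type*} [NormedAddCommGroup H] [InnerProductSpace ℝ H] [CompleteSpace H]
    (A : Set H) (hA : IsCompact A) (hsym : ∀ z ∈ A, -z ∈ A)
    (f : H → ℝ) (f' : H → H) (hgrad : ∀ x, HasGradientAt f (f' x) x)
    (hconv : ConvexOn ℝ univ f)
    (habs : ∀ x ∈ span ℝ A, ∃ c : ℝ, 0 < c ∧ x ∈ c • convexHull ℝ A)
    (hpos : ∀ x ∈ span ℝ A, x ≠ 0 → 0 < gauge (convexHull ℝ A) x)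
    (δ LA : ℝ) (hδ0 : 0 < δ) (hδ1 : δ ≤ 1) (hLA : 0 < LA)
    (hsmooth : ∀ x ∈ span ℝ A, ∀ z ∈ span ℝ A, gauge (convexHull ℝ A) z = 1 →
      ∀ γ : ℝ, 0 < γ → f (x + γ • z) ≤ f x + γ * ⟪f' x, z⟫ + LA / 2 * γ ^ 2)
    (x : H) (hx : x ∈ span ℝ A)
    (ztil : H) (hztil : ztil ∈ A)
    (hlmo : ⟪f' x, ztil⟫ ≤ δ * sInf ((fun w => ⟪f' x, w⟫) '' A)) :
    f (x - (⟪f' x, ztil⟫ / LA) • ztil) ≤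
      f x - δ ^ 2 / (2 * LA) * (sSup ((fun z => ⟪-f' x, z⟫) '' A)) ^ 2 := by
  set g := f' x with hg
  set c : ℝ := ⟪g, ztil⟫ with hc
  set T : Set ℝ := (fun z => ⟪-g, z⟫) '' A with hT
  set S : ℝ := sSup T with hS
  have hcontT : Continuous fun z : H => ⟪-g, z⟫ := continuous_const.inner continuous_id
  have hcontI : Continuous fun z : H => ⟪g, z⟫ := continuous_const.inner continuous_id
  have hTne : T.Nonempty := ⟨_, mem_image_of_mem _ hztil⟩
  have hTbdd : BddAbove T := (hA.image hcontT).bddAbove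
  -- sInf of the other set equals -S
  have hset : -((fun w => ⟪g, w⟫) '' A) = T := by
    ext r
    simp only [Set.mem_neg, Set.mem_image, hT, inner_neg_left]
    constructor
    · rintro ⟨w, hw, h⟩; exact ⟨w, hw, by linarith⟩
    · rintro ⟨w, hw, h⟩; exact ⟨w, hw, by linarith⟩
  have hinf : sInf ((fun w => ⟪g, w⟫) '' A) = -S := by
    rw [Real.sInf_def, hset]
  have hSnn : 0 ≤ S := by
    have h1 : ⟪-g, ztil⟫ ≤ S := le_csSup hTbdd (mem_image_of_mem _ hztil)
    have h2 : ⟪-g, -ztil⟫ ≤ S := le_csSup hTbdd (mem_image_of_mem _ (hsym _ hztil))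
    rw [inner_neg_left] at h1
    rw [inner_neg_left, inner_neg_right] at h2
    linarith
  have hcS : c ≤ -(δ * S) := by rw [hinf] at hlmo; linarith
  by_cases hc0 : c = 0
  · have hS0 : S = 0 := by nlinarith
    have : x - (c / LA) • ztil = x := by rw [hc0]; simp
    rw [this, hS0]
    simp
  · have hclt : c < 0 := lt_of_le_of_ne (by nlinarith) hc0
    have hzt0 : ztil ≠ 0 := by
      intro h; apply hc0; rw [hc, h, inner_zero_right]
    have hztspan : ztil ∈ span ℝ A := subset_span hztil
    set t : ℝ := gauge (convexHull ℝ A) ztil with ht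
    have ht0 : 0 < t := hpos _ hztspan hzt0
    have ht1 : t ≤ 1 := gauge_le_one_of_mem (subset_convexHull ℝ A hztil)
    set z : H := t⁻¹ • ztil with hz
    have hzspan : z ∈ span ℝ A := Submodule.smul_mem _ _ hztspan
    have hgauge : gauge (convexHull ℝ A) z = 1 := by
      rw [hz, gauge_smul_of_nonneg (inv_nonneg.2 ht0.le), smul_eq_mul, ← ht,
        inv_mul_cancel₀ ht0.ne']
    set γ : ℝ := (-c / LA) * t with hγ
    have hγ0 : 0 < γ := by
      apply mul_pos (div_pos (by linarith) hLA) ht0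
    have key := hsmooth x hx z hzspan hgauge γ hγ0
    have hxplus : x + γ • z = x - (c / LA) • ztil := by
      rw [hz, smul_smul, hγ]
      rw [mul_assoc, mul_inv_cancel₀ ht0.ne', mul_one]
      rw [sub_eq_add_neg, ← neg_smul, neg_div]
    have hinner : ⟪g, z⟫ = t⁻¹ * c := by
      rw [hz, real_inner_smul_right, hc]
    rw [hxplus, hinner] at key
    have hexpand : γ * (t⁻¹ * c) = -c / LA * c := by
      rw [hγ]; field_simp
    rw [hexpand] at key
    have hγsq : LA / 2 * γ ^ 2 ≤ c ^ 2 / (2 * LA) := by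
      rw [hγ]
      have : (-c / LA * t) ^ 2 = c ^ 2 / LA ^ 2 * t ^ 2 := by ring
      rw [this]
      have ht2 : t ^ 2 ≤ 1 := by nlinarith
      have hcsq : 0 ≤ c ^ 2 / LA ^ 2 := by positivity
      calc LA / 2 * (c ^ 2 / LA ^ 2 * t ^ 2) ≤ LA / 2 * (c ^ 2 / LA ^ 2 * 1) := by
            apply mul_le_mul_of_nonneg_left _ (by positivity)
            exact mul_le_mul_of_nonneg_left ht2 hcsq
        _ = c ^ 2 / (2 * LA) := by field_simp
    have hδS : δ ^ 2 / (2 * LA) * S ^ 2 ≤ c ^ 2 / (2 * LA) := by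
      have h1 : δ * S ≤ -c := by linarith
      have h0 : 0 ≤ δ * S := mul_nonneg hδ0.le hSnn
      have h2 : (δ * S) ^ 2 ≤ c ^ 2 := by nlinarith [mul_le_mul h1 h1 h0 (by linarith : (0:ℝ) ≤ -c)]
      have : (δ * S) ^ 2 = δ ^ 2 * S ^ 2 := by ring
      rw [this] at h2
      rw [div_mul_eq_mul_div, div_le_div_iff₀ (by linarith) (by linarith)]
      exact mul_le_mul_of_nonneg_right h2 (by linarith)
    have hfinal : -c / LA * c + c ^ 2 / (2 * LA) ≤ -(δ ^ 2 / (2 * LA) * S ^ 2) := by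
      have : -c / LA * c = -(c ^ 2 / LA) := by ring
      rw [this]
      have hsplit : c ^ 2 / LA = c ^ 2 / (2 * LA) + c ^ 2 / (2 * LA) := by
        field_simp; ring
      linarith
    linarith
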